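/- For every m ∈ ℕ and every x = (x_1,...,x_m) ∈ ℝ^m, 2(1 − cos(π/(2m+1))) |x|² ≤ Σ_{j=1}^{m−1} (x_{j+1} − x_j)² + min{x_1²,...,x_m²}, and the constant 2(1 − cos(π/(2m+1))) is optimal: there exists x ≠ 0 attaining equality. -/
import Mathlib

open Real Finset

private lemma pts (p q : ℝ) :
    Real.cos (p - q) + Real.cos (p + q) = 2 * (Real.cos p * Real.cos q) := by
  rw [Real.cos_sub, Real.cos_add]; ring

private lemma interior_id (a lam θ C : ℝ) (hlam : lam = 2 * (1 - Real.cos a)) :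
    lam * (Real.cos θ * C) = 2 * (Real.cos θ * C) - Real.cos (θ - a) * C - Real.cos (θ + a) * C := by
  subst hlam; rw [Real.cos_sub, Real.cos_add]; ring

private lemma endA_id (a lam θ C : ℝ) (hlam : lam = 2 * (1 - Real.cos a))
    (hθ : θ + a = Real.pi / 2) :
    lam * (Real.cos θ * C) = 2 * (Real.cos θ * C) - Real.cos (θ - a) * C := by
  have h : Real.cos (θ + a) = 0 := by rw [hθ]; exact Real.cos_pi_div_two
  have h2 := interior_id a lam θ C hlam
  rw [h] at h2; linarith

private lemma endB_id (a lam θ C : ℝ) (hlam : lam = 2 * (1 - Real.cos a)) (hθ : a = 2 * θ) :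
    lam * (Real.cos θ * C) = Real.cos θ * C - Real.cos (θ + a) * C := by
  subst hlam hθ
  rw [Real.cos_add, Real.cos_two_mul, Real.sin_two_mul]
  linear_combination (-2 * Real.cos θ * C) * Real.sin_sq_add_cos_sq θ

private lemma kpoint_id (a lam p q : ℝ) (hlam : lam = 2 * (1 - Real.cos a))
    (hsum : p + q + a = Real.pi - (p + q)) :
    3 * (Real.cos p * Real.cos q) - Real.cos (p - a) * Real.cos q
      - Real.cos (q - a) * Real.cos p - lam * (Real.cos p * Real.cos q)
      = (Real.cos (p - q) - Real.cos (p + q - a)) / 2 := by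
  have f3 := pts p q
  have f4 := pts (p - a) q
  have f5 := pts p (q - a)
  have f1 := pts (p - q) a
  have f2 := pts (p + q) a
  rw [show p - a - q = p - q - a by ring, show p - a + q = p + q - a by ring] at f4
  rw [show p - (q - a) = p - q + a by ring, show p + (q - a) = p + q - a by ring] at f5
  have f67 : Real.cos (p + q + a) + Real.cos (p + q) = 0 := by
    rw [hsum, Real.cos_pi_sub]; ring
  subst hlam
  linear_combination (-1/2 - Real.cos a) * f3 + (1/2) * f4 + (1/2) * f5
    - (1/2) * f1 - (1/2) * f2 + (1/2) * f67

private lemma mono_cos (a M j : ℝ) (hapos : 0 < a) (hpi : (2 * M + 1) * a = Real.pi)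
    (hj2 : 1 ≤ j) (hj3 : j + 2 ≤ M) :
    Real.cos (((j + 1/2) * a) + ((M - j - 1/2) * a) - a)
      ≤ Real.cos (((j + 1/2) * a) - ((M - j - 1/2) * a)) := by
  have habs : |((j + 1/2) * a) - ((M - j - 1/2) * a)| ≤ (M - 1) * a := by
    rw [abs_le]
    constructor <;> nlinarith
  rw [show ((j + 1/2) * a) + ((M - j - 1/2) * a) - a = (M - 1) * a by ring,
    ← Real.cos_abs (((j + 1/2) * a) - ((M - j - 1/2) * a))]
  exact Real.cos_le_cos_of_nonneg_of_le_pi (abs_nonneg _) (by nlinarith) habs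

set_option maxHeartbeats 1000000 in
private lemma key_ineq (m K : ℕ) (hm : 2 ≤ m) (hK : K < m) (x : ℕ → ℝ) :
    2 * (1 - Real.cos (Real.pi / (2 * m + 1))) * ∑ j ∈ range m, x j ^ 2 ≤
      (∑ j ∈ range (m - 1), (x (j + 1) - x j) ^ 2) + x K ^ 2 := by
  have hm' : (2 : ℝ) ≤ (m : ℝ) := by exact_mod_cast hm
  have hK1 : (K : ℝ) + 1 ≤ (m : ℝ) := by exact_mod_cast hK
  have hK0 : (0 : ℝ) ≤ (K : ℝ) := Nat.cast_nonneg K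
  set M : ℝ := (m : ℝ) with hM_def
  set a : ℝ := Real.pi / (2 * m + 1) with ha_def
  have hden : (0:ℝ) < 2 * M + 1 := by linarith
  have haπ : (2 * M + 1) * a = Real.pi := by rw [ha_def, hM_def]; field_simp
  have hapos : 0 < a := by rw [ha_def]; positivity
  set lam : ℝ := 2 * (1 - Real.cos a) with hlam_def
  set w : ℕ → ℝ := fun j =>
    if j ≤ K then Real.cos (((j : ℝ) + 1/2) * a) * Real.cos ((M - K - 1/2) * a)
    else Real.cos ((M - (j : ℝ) - 1/2) * a) * Real.cos (((K : ℝ) + 1/2) * a) with hw_def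
  have hcpos : ∀ t : ℝ, 0 ≤ t → t ≤ M - 1/2 → 0 < Real.cos (t * a) := by
    intro t h0 h1
    apply Real.cos_pos_of_mem_Ioo
    constructor
    · have h2 : 0 ≤ t * a := mul_nonneg h0 hapos.le
      nlinarith [Real.pi_pos]
    · have h2 : t * a ≤ (M - 1/2) * a := mul_le_mul_of_nonneg_right h1 hapos.le
      nlinarith
  have hwpos : ∀ j, j < m → 0 < w j := by
    intro j hj
    have hj' : (j : ℝ) + 1 ≤ M := by rw [hM_def]; exact_mod_cast hj
    by_cases h : j ≤ K
    · simp only [hw_def, if_pos h]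
      exact mul_pos (hcpos _ (by positivity) (by linarith)) (hcpos _ (by linarith) (by linarith))
    · simp only [hw_def, if_neg h]
      exact mul_pos (hcpos _ (by linarith) (by linarith)) (hcpos _ (by linarith) (by linarith))
  have hwl : ∀ j, j ≤ K → w j = Real.cos (((j : ℝ) + 1/2) * a) * Real.cos ((M - K - 1/2) * a) := by
    intro j h; simp only [hw_def, if_pos h]
  have hwr : ∀ j, K ≤ j → w j = Real.cos ((M - (j : ℝ) - 1/2) * a) * Real.cos (((K : ℝ) + 1/2) * a) := by
    intro j h
    rcases eq_or_lt_of_le h with rfl | h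
    · simp only [hw_def, le_refl, if_pos]; ring
    · have h' : ¬ j ≤ K := by omega
      simp only [hw_def, if_neg h']
  have hhalfpi : (M + 1/2) * a = Real.pi / 2 := by linarith
  -- the scalar supersolution inequality
  have hscal : ∀ j, j < m →
      lam * w j ≤ (if j = 0 then 0 else w j - w (j - 1))
        + (if j = m - 1 then 0 else w j - w (j + 1)) + (if j = K then w j else 0) := by
    intro j hj
    by_cases hj0 : j = 0
    · subst hj0
      rw [if_pos rfl, if_neg (by omega : ¬ (0:ℕ) = m - 1)]
      by_cases hK0' : (0:ℕ) = K
      · rw [if_pos hK0']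
        have hKz : K = 0 := hK0'.symm
        have h0 : w 0 = Real.cos ((M - (0:ℝ) - 1/2) * a) * Real.cos (((K:ℝ) + 1/2) * a) := by
          rw [hwr 0 (by omega)]; norm_num
        have h1 : w 1 = Real.cos ((M - (0:ℝ) - 1/2) * a - a) * Real.cos (((K:ℝ) + 1/2) * a) := by
          rw [hwr 1 (by omega)]
          congr 2
          push_cast; ring
        have hA := endA_id a lam ((M - (0:ℝ) - 1/2) * a) (Real.cos (((K:ℝ) + 1/2) * a)) hlam_def
          (by linear_combination hhalfpi)
        rw [h0, h1]; linarith [hA]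
      · rw [if_neg hK0']
        have hKge : 1 ≤ K := by omega
        have h0 : w 0 = Real.cos (((0:ℝ) + 1/2) * a) * Real.cos ((M - K - 1/2) * a) := by
          rw [hwl 0 (by omega)]; norm_num
        have h1 : w 1 = Real.cos (((0:ℝ) + 1/2) * a + a) * Real.cos ((M - K - 1/2) * a) := by
          rw [hwl 1 hKge]
          congr 2
          push_cast; ring
        have hB := endB_id a lam (((0:ℝ) + 1/2) * a) (Real.cos ((M - K - 1/2) * a)) hlam_def
          (by ring)
        rw [h0, h1]; linarith [hB]
    · by_cases hjm : j = m - 1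
      · subst hjm
        rw [if_neg hj0, if_pos rfl]
        have hsub : m - 1 - 1 = m - 2 := by omega
        rw [hsub]
        have hcast1 : ((m - 1 : ℕ) : ℝ) = M - 1 := by
          rw [hM_def, Nat.cast_sub (by omega)]; norm_num
        have hcast2 : ((m - 2 : ℕ) : ℝ) = M - 2 := by
          rw [hM_def, Nat.cast_sub (by omega)]; norm_num
        by_cases hKm : m - 1 = K
        · rw [if_pos hKm]
          have hKm' : K = m - 1 := hKm.symm
          have h0 : w (m - 1) = Real.cos ((M - 1 + 1/2) * a) * Real.cos ((M - K - 1/2) * a) := by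
            rw [hwl (m-1) (by omega), hcast1]
          have h1 : w (m - 2) = Real.cos ((M - 1 + 1/2) * a - a) * Real.cos ((M - K - 1/2) * a) := by
            rw [hwl (m-2) (by omega), hcast2]
            rw [show (M - 1 + 1/2) * a - a = (M - 2 + 1/2) * a by ring]
          have hA := endA_id a lam ((M - 1 + 1/2) * a) (Real.cos ((M - (K:ℝ) - 1/2) * a)) hlam_def
            (by linear_combination hhalfpi)
          rw [h0, h1]; linarith [hA]
        · rw [if_neg hKm]
          have hKle : K ≤ m - 2 := by omega
          have h0 : w (m - 1) = Real.cos (((0:ℝ) + 1/2) * a) * Real.cos (((K:ℝ) + 1/2) * a) := by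
            rw [hwr (m-1) (by omega), hcast1]
            rw [show (M - (M - 1) - 1/2) * a = ((0:ℝ) + 1/2) * a by ring]
          have h1 : w (m - 2) = Real.cos (((0:ℝ) + 1/2) * a + a) * Real.cos (((K:ℝ) + 1/2) * a) := by
            rw [hwr (m-2) (by omega), hcast2]
            rw [show (M - (M - 2) - 1/2) * a = ((0:ℝ) + 1/2) * a + a by ring]
          have hB := endB_id a lam (((0:ℝ) + 1/2) * a) (Real.cos (((K:ℝ) + 1/2) * a)) hlam_def
            (by ring)
          rw [h0, h1]; linarith [hB]
      · -- interior
        rw [if_neg hj0, if_neg hjm]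
        have hj1 : 1 ≤ j := by omega
        have hjm2 : j ≤ m - 2 := by omega
        have hcastj : ((j - 1 : ℕ) : ℝ) = (j : ℝ) - 1 := by
          rw [Nat.cast_sub (by omega)]; norm_num
        have hcastj1 : ((j + 1 : ℕ) : ℝ) = (j : ℝ) + 1 := by push_cast; ring
        rcases lt_trichotomy j K with hlt | heq | hgt
        · rw [if_neg (by omega : ¬ j = K)]
          have h0 : w j = Real.cos (((j:ℝ) + 1/2) * a) * Real.cos ((M - K - 1/2) * a) :=
            hwl j (by omega)
          have hm1 : w (j - 1) = Real.cos (((j:ℝ) + 1/2) * a - a) * Real.cos ((M - K - 1/2) * a) := by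
            rw [hwl (j-1) (by omega), hcastj,
              show ((j:ℝ) - 1 + 1/2) * a = ((j:ℝ) + 1/2) * a - a by ring]
          have hp1 : w (j + 1) = Real.cos (((j:ℝ) + 1/2) * a + a) * Real.cos ((M - K - 1/2) * a) := by
            rw [hwl (j+1) (by omega), hcastj1,
              show ((j:ℝ) + 1 + 1/2) * a = ((j:ℝ) + 1/2) * a + a by ring]
          have hI := interior_id a lam (((j:ℝ) + 1/2) * a) (Real.cos ((M - K - 1/2) * a)) hlam_def
          rw [h0, hm1, hp1]; linarith [hI]
        · -- j = K interior
          rw [if_pos heq]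
          have hKj : (K:ℝ) = (j:ℝ) := by exact_mod_cast heq.symm
          have h0 : w j = Real.cos (((j:ℝ) + 1/2) * a) * Real.cos ((M - (j:ℝ) - 1/2) * a) := by
            rw [hwl j heq.le, hKj]
          have hm1 : w (j - 1) = Real.cos (((j:ℝ) + 1/2) * a - a) * Real.cos ((M - (j:ℝ) - 1/2) * a) := by
            rw [hwl (j-1) (by omega), hKj, hcastj,
              show ((j:ℝ) - 1 + 1/2) * a = ((j:ℝ) + 1/2) * a - a by ring]
          have hp1 : w (j + 1) = Real.cos ((M - (j:ℝ) - 1/2) * a - a) * Real.cos (((j:ℝ) + 1/2) * a) := by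
            rw [hwr (j+1) (by omega), hKj, hcastj1,
              show (M - ((j:ℝ) + 1) - 1/2) * a = (M - (j:ℝ) - 1/2) * a - a by ring]
          have hkey := kpoint_id a lam (((j:ℝ) + 1/2) * a) ((M - (j:ℝ) - 1/2) * a) hlam_def
            (by linear_combination haπ)
          have hj2 : (1:ℝ) ≤ (j:ℝ) := by exact_mod_cast hj1
          have hj3 : (j:ℝ) + 2 ≤ M := by
            rw [hM_def]; exact_mod_cast (by omega : j + 2 ≤ m)
          have hmono := mono_cos a M (j:ℝ) hapos haπ hj2 hj3
          rw [h0, hm1, hp1]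
          linarith [hkey, hmono]
        · rw [if_neg (by omega : ¬ j = K)]
          have h0 : w j = Real.cos ((M - (j:ℝ) - 1/2) * a) * Real.cos (((K:ℝ) + 1/2) * a) :=
            hwr j (by omega)
          have hm1 : w (j - 1) = Real.cos ((M - (j:ℝ) - 1/2) * a + a) * Real.cos (((K:ℝ) + 1/2) * a) := by
            rw [hwr (j-1) (by omega), hcastj,
              show (M - ((j:ℝ) - 1) - 1/2) * a = (M - (j:ℝ) - 1/2) * a + a by ring]
          have hp1 : w (j + 1) = Real.cos ((M - (j:ℝ) - 1/2) * a - a) * Real.cos (((K:ℝ) + 1/2) * a) := by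
            rw [hwr (j+1) (by omega), hcastj1,
              show (M - ((j:ℝ) + 1) - 1/2) * a = (M - (j:ℝ) - 1/2) * a - a by ring]
          have hI := interior_id a lam ((M - (j:ℝ) - 1/2) * a) (Real.cos (((K:ℝ) + 1/2) * a)) hlam_def
          rw [h0, hm1, hp1]; linarith [hI]
  -- summation machinery
  set u : ℕ → ℝ := fun j => x j ^ 2 / w j with hu_def
  have hu0 : ∀ j, j < m → 0 ≤ u j := fun j hj => div_nonneg (sq_nonneg _) (hwpos j hj).le
  have hwu : ∀ j, j < m → w j * u j = x j ^ 2 := by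
    intro j hj
    simp only [hu_def]
    field_simp [(hwpos j hj).ne']
  have hm1 : m - 1 + 1 = m := by omega
  have hedge : ∀ j ∈ range (m-1), (w (j+1) - w j) * (u (j+1) - u j) ≤ (x (j+1) - x j)^2 := by
    intro j hj
    rw [Finset.mem_range] at hj
    have hwj := hwpos j (by omega)
    have hwj1 := hwpos (j+1) (by omega)
    have hid : (x (j+1) - x j)^2 - (w (j+1) - w j) * (u (j+1) - u j)
        = (w j * x (j+1) - w (j+1) * x j)^2 / (w j * w (j+1)) := by
      simp only [hu_def]; field_simp [hwj.ne', hwj1.ne']; ring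
    have hnn : 0 ≤ (w j * x (j+1) - w (j+1) * x j)^2 / (w j * w (j+1)) :=
      div_nonneg (sq_nonneg _) (mul_pos hwj hwj1).le
    linarith
  have hsplit : ∑ j ∈ range (m-1), (w (j+1) - w j) * (u (j+1) - u j)
      = (∑ j ∈ range (m-1), (w (j+1) - w j) * u (j+1))
        - ∑ j ∈ range (m-1), (w (j+1) - w j) * u j := by
    rw [← Finset.sum_sub_distrib]
    apply Finset.sum_congr rfl
    intro j _; ring
  have hP : ∑ j ∈ range (m-1), (w (j+1) - w j) * u (j+1)
      = ∑ j ∈ range m, (if j = 0 then 0 else (w j - w (j-1)) * u j) := by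
    conv_rhs => rw [← hm1]
    rw [Finset.sum_range_succ']
    simp
  have hQ : ∑ j ∈ range (m-1), (w (j+1) - w j) * u j
      = ∑ j ∈ range m, (if j = m-1 then 0 else (w (j+1) - w j) * u j) := by
    conv_rhs => rw [← hm1]
    rw [Finset.sum_range_succ, if_pos (show m - 1 = m - 1 + 1 - 1 by omega), add_zero]
    apply Finset.sum_congr rfl
    intro j hj
    rw [Finset.mem_range] at hj
    rw [if_neg (by omega)]
  have hpt : ∀ j ∈ range m, lam * x j ^ 2 - (if j = K then x j ^ 2 else 0)
      ≤ (if j = 0 then 0 else (w j - w (j-1)) * u j)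
        - (if j = m-1 then 0 else (w (j+1) - w j) * u j) := by
    intro j hj
    rw [Finset.mem_range] at hj
    have hs := hscal j hj
    have hu := hu0 j hj
    have hxw := hwu j hj
    by_cases h0 : j = 0
    · have hne : ¬ j = m - 1 := by omega
      rw [if_pos h0, if_neg hne] at hs ⊢
      by_cases h2 : j = K
      · rw [if_pos h2] at hs ⊢
        have hmul := mul_le_mul_of_nonneg_right hs hu
        have hx2 : lam * x j ^ 2 = lam * (w j * u j) := by rw [hxw]
        nlinarith [hmul, hxw, hx2]
      · rw [if_neg h2] at hs ⊢
        have hmul := mul_le_mul_of_nonneg_right hs hu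
        have hx2 : lam * x j ^ 2 = lam * (w j * u j) := by rw [hxw]
        nlinarith [hmul, hxw, hx2]
    · by_cases h1 : j = m - 1
      · rw [if_neg h0, if_pos h1] at hs ⊢
        by_cases h2 : j = K
        · rw [if_pos h2] at hs ⊢
          have hmul := mul_le_mul_of_nonneg_right hs hu
          have hx2 : lam * x j ^ 2 = lam * (w j * u j) := by rw [hxw]
          nlinarith [hmul, hxw, hx2]
        · rw [if_neg h2] at hs ⊢
          have hmul := mul_le_mul_of_nonneg_right hs hu
          have hx2 : lam * x j ^ 2 = lam * (w j * u j) := by rw [hxw]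
          nlinarith [hmul, hxw, hx2]
      · rw [if_neg h0, if_neg h1] at hs ⊢
        by_cases h2 : j = K
        · rw [if_pos h2] at hs ⊢
          have hmul := mul_le_mul_of_nonneg_right hs hu
          have hx2 : lam * x j ^ 2 = lam * (w j * u j) := by rw [hxw]
          nlinarith [hmul, hxw, hx2]
        · rw [if_neg h2] at hs ⊢
          have hmul := mul_le_mul_of_nonneg_right hs hu
          have hx2 : lam * x j ^ 2 = lam * (w j * u j) := by rw [hxw]
          nlinarith [hmul, hxw, hx2]
  have hsumpt := Finset.sum_le_sum hpt
  rw [Finset.sum_sub_distrib, Finset.sum_sub_distrib] at hsumpt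
  rw [Finset.sum_ite_eq' (range m) K (fun j => x j ^ 2)] at hsumpt
  rw [if_pos (Finset.mem_range.mpr hK)] at hsumpt
  have hmulsum : ∑ j ∈ range m, lam * x j ^ 2 = lam * ∑ j ∈ range m, x j ^ 2 := by
    rw [Finset.mul_sum]
  rw [hmulsum] at hsumpt
  have hfinal := Finset.sum_le_sum hedge
  rw [hsplit, hP, hQ] at hfinal
  linarith

private lemma step_id (r lam Sn Sn1 Sn2 : ℝ) (hrec : Sn2 = r * Sn1 - Sn) (hlam : lam = 2 - r) :
    (Sn1 - Sn) ^ 2 =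
      lam * Sn1 ^ 2 + ((1 - r) * Sn1 * Sn2 + Sn2 ^ 2) - ((1 - r) * Sn * Sn1 + Sn1 ^ 2) := by
  subst hrec hlam; ring

private lemma key_eq (m : ℕ) (hm : 1 ≤ m) :
    2 * (1 - Real.cos (Real.pi / (2 * m + 1))) *
        ∑ j ∈ range m, Real.sin ((j + 1) * (Real.pi / (2 * m + 1))) ^ 2 =
      (∑ j ∈ range (m - 1),
          (Real.sin ((j + 2) * (Real.pi / (2 * m + 1))) -
            Real.sin ((j + 1) * (Real.pi / (2 * m + 1)))) ^ 2) +
        Real.sin (Real.pi / (2 * m + 1)) ^ 2 := by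
  have hm' : (1 : ℝ) ≤ (m : ℝ) := by exact_mod_cast hm
  set a : ℝ := Real.pi / (2 * m + 1) with ha_def
  have hden : (0:ℝ) < 2 * m + 1 := by linarith
  have haπ : (2 * (m:ℝ) + 1) * a = Real.pi := by
    rw [ha_def]; field_simp
  set S : ℕ → ℝ := fun j => Real.sin ((j + 1) * a) with hS_def
  set r : ℝ := 2 * Real.cos a with hr_def
  set lam : ℝ := 2 * (1 - Real.cos a) with hlam_def
  have hlamr : lam = 2 - r := by rw [hlam_def, hr_def]; ring
  have hrec : ∀ n : ℕ, S (n + 2) = r * S (n + 1) - S n := by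
    intro n
    have h1 : Real.sin (((n:ℝ) + 2) * a + a) + Real.sin (((n:ℝ) + 2) * a - a)
        = 2 * Real.sin (((n:ℝ) + 2) * a) * Real.cos a := by
      rw [Real.sin_add, Real.sin_sub]; ring
    simp only [hS_def, hr_def]
    push_cast
    have e1 : ((n:ℝ) + 2 + 1) * a = ((n:ℝ) + 2) * a + a := by ring
    have e2 : ((n:ℝ) + 1 + 1) * a = ((n:ℝ) + 2) * a := by ring
    have e3 : ((n:ℝ) + 1) * a = ((n:ℝ) + 2) * a - a := by ring
    rw [e1, e2, e3]; linarith
  set H : ℕ → ℝ := fun n => (1 - r) * S n * S (n + 1) + S (n + 1) ^ 2 with hH_def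
  have C : ∀ n : ℕ, ∑ j ∈ range n, (S (j + 1) - S j) ^ 2 =
      lam * ∑ j ∈ range (n + 1), S j ^ 2 + H n - H 0 - lam * S 0 ^ 2 := by
    intro n
    induction n with
    | zero => simp
    | succ n ih =>
        rw [Finset.sum_range_succ, ih, Finset.sum_range_succ (fun j => S j ^ 2) (n+1)]
        have := step_id r lam (S n) (S (n + 1)) (S (n + 2)) (hrec n) hlamr
        simp only [hH_def]
        ring_nf
        ring_nf at this
        linarith
  have hCm := C (m - 1)
  have hm1 : m - 1 + 1 = m := by omega
  rw [hm1] at hCm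
  -- boundary values
  have hhalf : (m : ℝ) * a = Real.pi / 2 - a / 2 := by linarith
  have hSm1 : S (m - 1) = Real.cos (a / 2) := by
    simp only [hS_def]
    have : ((m:ℝ) - 1 + 1) * a = Real.pi / 2 - a / 2 := by rw [← hhalf]; ring
    rw [show ((m - 1 : ℕ) : ℝ) = (m : ℝ) - 1 by push_cast [hm]; ring, this,
      Real.sin_pi_div_two_sub]
  have hSm : S m = Real.cos (a / 2) := by
    simp only [hS_def]
    have : ((m:ℝ) + 1) * a = Real.pi - ((m:ℝ) - 1 + 1) * a := by
      rw [show ((m:ℝ) - 1 + 1) * a = (m:ℝ) * a by ring]; linarith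
    rw [this, Real.sin_pi_sub, show ((m:ℝ) - 1 + 1) * a = Real.pi / 2 - a / 2 by
      rw [← hhalf]; ring, Real.sin_pi_div_two_sub]
  have hS0 : S 0 = Real.sin a := by simp [hS_def]
  have hS1 : S 1 = r * S 0 := by
    simp only [hS_def, hr_def, hS0]
    push_cast
    rw [show ((1:ℝ) + 1) * a = 2 * a by ring, Real.sin_two_mul,
      show ((0:ℝ) + 1) * a = a by ring]
    ring
  have hHm1 : H (m - 1) = lam * Real.cos (a / 2) ^ 2 := by
    simp only [hH_def]
    rw [hm1, hSm1, hSm, hlamr]; ring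
  have hH0 : H 0 = r * S 0 ^ 2 := by
    simp only [hH_def]; rw [hS1]; ring
  have htrig : lam * Real.cos (a / 2) ^ 2 = Real.sin a ^ 2 := by
    have h1 := Real.sin_sq_add_cos_sq a
    have h2 : Real.cos (a / 2) ^ 2 = 1 / 2 + Real.cos a / 2 := by
      have h3 := Real.cos_sq (a / 2)
      rwa [show 2 * (a / 2) = a by ring] at h3
    rw [hlam_def, h2]; nlinarith
  -- convert the goal sums
  have hgoal1 : ∑ j ∈ range m, Real.sin ((j + 1) * a) ^ 2 = ∑ j ∈ range m, S j ^ 2 := by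
    apply Finset.sum_congr rfl; intro j hj; simp [hS_def]
  have hgoal2 : ∑ j ∈ range (m - 1), (Real.sin ((j + 2) * a) - Real.sin ((j + 1) * a)) ^ 2
      = ∑ j ∈ range (m - 1), (S (j + 1) - S j) ^ 2 := by
    apply Finset.sum_congr rfl; intro j hj
    simp only [hS_def]
    push_cast
    ring_nf
  rw [hgoal1, hgoal2, hCm, hHm1, hH0, htrig, hS0]
  linear_combination (Real.sin a ^ 2) * hlamr


set_option maxHeartbeats 2000000 in
/-- for every `m ∈ ℕ`, `m ≥ 1`, and every `x ∈ ℝ^m`,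
`2(1 − cos(π/(2m+1))) |x|² ≤ Σ_{j=1}^{m−1} (x_{j+1} − x_j)² + min_j x_j²`,
and the constant is optimal: some `x ≠ 0` attains equality. -/
theorem tridiagonal_inequality (m : ℕ) (hm : 0 < m) :
    (∀ x : Fin m → ℝ,
      2 * (1 - Real.cos (Real.pi / (2 * m + 1))) * ∑ i, x i ^ 2 ≤
        (∑ j : Fin m, if h : (j : ℕ) + 1 < m then (x ⟨(j : ℕ) + 1, h⟩ - x j) ^ 2 else 0)
          + ⨅ i, x i ^ 2) ∧
    ∃ x : Fin m → ℝ, x ≠ 0 ∧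
      2 * (1 - Real.cos (Real.pi / (2 * m + 1))) * ∑ i, x i ^ 2 =
        (∑ j : Fin m, if h : (j : ℕ) + 1 < m then (x ⟨(j : ℕ) + 1, h⟩ - x j) ^ 2 else 0)
          + ⨅ i, x i ^ 2 := by
  haveI : Nonempty (Fin m) := ⟨⟨0, hm⟩⟩
  set a : ℝ := Real.pi / (2 * m + 1) with ha_def
  have hden : (0:ℝ) < 2 * m + 1 := by positivity
  have hapos : 0 < a := by rw [ha_def]; positivity
  have haπ : (2 * (m:ℝ) + 1) * a = Real.pi := by rw [ha_def]; field_simp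
  -- generic facts about converting the Fin sums
  have hconv : ∀ x : Fin m → ℝ, ∀ X : ℕ → ℝ, (∀ i : Fin m, X i = x i) →
      (∑ i, x i ^ 2 = ∑ j ∈ Finset.range m, X j ^ 2) ∧
      ((∑ j : Fin m, if h : (j : ℕ) + 1 < m then (x ⟨(j : ℕ) + 1, h⟩ - x j) ^ 2 else 0)
        = ∑ j ∈ Finset.range (m - 1), (X (j + 1) - X j) ^ 2) := by
    intro x X hX
    constructor
    · rw [← Fin.sum_univ_eq_sum_range (fun j => X j ^ 2) m]
      exact Finset.sum_congr rfl fun i _ => by rw [hX i]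
    · have e1 : (∑ j : Fin m, if h : (j : ℕ) + 1 < m then (x ⟨(j : ℕ) + 1, h⟩ - x j) ^ 2 else 0)
          = ∑ j ∈ Finset.range m, (if j + 1 < m then (X (j + 1) - X j) ^ 2 else 0) := by
        rw [← Fin.sum_univ_eq_sum_range (fun j => if j + 1 < m then (X (j + 1) - X j) ^ 2 else 0) m]
        apply Finset.sum_congr rfl
        intro i _
        by_cases h : (i : ℕ) + 1 < m
        · rw [dif_pos h, if_pos h]
          have : X ((i : ℕ) + 1) = x ⟨(i : ℕ) + 1, h⟩ := hX ⟨(i : ℕ) + 1, h⟩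
          rw [this, hX i]
        · rw [dif_neg h, if_neg h]
      rw [e1]
      rw [← Finset.sum_subset (Finset.range_subset_range.2 (Nat.sub_le m 1))]
      · exact Finset.sum_congr rfl fun j hj => if_pos (by have := Finset.mem_range.1 hj; omega)
      · intro j hj hj2
        rw [Finset.mem_range] at hj
        rw [Finset.mem_range] at hj2
        rw [if_neg (by omega)]
  constructor
  · -- the inequality
    intro x
    obtain ⟨k, hk⟩ := Finite.exists_min (fun i : Fin m => x i ^ 2)
    have hbdd : BddBelow (Set.range fun i : Fin m => x i ^ 2) := by
      refine ⟨0, ?_⟩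
      rintro y ⟨i, rfl⟩
      positivity
    have hle1 : ⨅ i, x i ^ 2 ≤ x k ^ 2 := ciInf_le hbdd k
    have hle2 : x k ^ 2 ≤ ⨅ i, x i ^ 2 := le_ciInf hk
    have hinf : ⨅ i, x i ^ 2 = x k ^ 2 := le_antisymm hle1 hle2
    set X : ℕ → ℝ := fun j => if h : j < m then x ⟨j, h⟩ else 0 with hX_def
    have hX : ∀ i : Fin m, X i = x i := by
      intro i; simp only [hX_def, i.isLt, dif_pos]
    obtain ⟨hc1, hc2⟩ := hconv x X hX
    rw [hc1, hc2, hinf]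
    rcases eq_or_lt_of_le (Nat.one_le_iff_ne_zero.2 (by omega) : 1 ≤ m) with h1 | h1
    · -- m = 1
      have hm1 : m = 1 := h1.symm
      subst hm1
      have hk0 : (k : ℕ) = 0 := by omega
      have hX0 : X 0 = x k := by
        rw [show (0:ℕ) = (k : ℕ) from hk0.symm, hX k]
      have hcos : Real.cos a = 1/2 := by
        rw [ha_def, show 2*((1:ℕ):ℝ)+1 = 3 by norm_num]
        exact Real.cos_pi_div_three
      rw [show (1:ℕ) - 1 = 0 from rfl, Finset.range_zero, Finset.sum_empty,
        Finset.range_one, Finset.sum_singleton, hX0, hcos]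
      norm_num
    · -- m ≥ 2
      have hx : x k ^ 2 = X (k : ℕ) ^ 2 := by rw [hX k]
      rw [hx]
      exact key_ineq m (k : ℕ) h1 k.isLt X
  · -- the equality witness
    refine ⟨fun i => Real.sin (((i : ℕ) + 1) * a), ?_, ?_⟩
    · intro h
      have h0 := congrFun h ⟨0, hm⟩
      simp only [Pi.zero_apply] at h0
      have hlt : a < Real.pi := by
        have : (2 * (m:ℝ) + 1) ≥ 3 := by
          have : (1:ℝ) ≤ (m:ℝ) := by exact_mod_cast hm
          linarith
        rw [ha_def]
        rw [div_lt_iff₀ hden]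
        nlinarith [Real.pi_pos]
      have hs : 0 < Real.sin a := Real.sin_pos_of_pos_of_lt_pi hapos hlt
      rw [show (((⟨0, hm⟩ : Fin m) : ℕ) : ℝ) = 0 by norm_num] at h0
      rw [show ((0:ℝ) + 1) * a = a by ring] at h0
      linarith
    · set x : Fin m → ℝ := fun i => Real.sin (((i : ℕ) + 1) * a) with hx_def
      have hbound : ∀ i : Fin m, ((i : ℕ) + 1 : ℝ) * a ≤ Real.pi / 2 := by
        intro i
        have hi : ((i : ℕ) : ℝ) + 1 ≤ (m : ℝ) := by exact_mod_cast i.isLt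
        nlinarith [hapos]
      have hpos : ∀ i : Fin m, 0 < Real.sin (((i : ℕ) + 1) * a) := by
        intro i
        apply Real.sin_pos_of_pos_of_lt_pi (by positivity)
        calc ((i : ℕ) + 1 : ℝ) * a ≤ Real.pi / 2 := hbound i
          _ < Real.pi := by linarith [Real.pi_pos]
      have hmin : ∀ i : Fin m, x ⟨0, hm⟩ ^ 2 ≤ x i ^ 2 := by
        intro i
        simp only [hx_def]
        have h1 : Real.sin ((((⟨0, hm⟩ : Fin m) : ℕ) + 1 : ℝ) * a) ≤ Real.sin (((i : ℕ) + 1) * a) := by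
          rw [show (((⟨0, hm⟩ : Fin m) : ℕ) : ℝ) = 0 by norm_num]
          apply Real.sin_le_sin_of_le_of_le_pi_div_two (by nlinarith [hapos, Real.pi_pos]) (hbound i)
          have : (0:ℝ) ≤ (i : ℕ) := Nat.cast_nonneg _
          nlinarith [hapos]
        have h2 : 0 < Real.sin ((((⟨0, hm⟩ : Fin m) : ℕ) + 1 : ℝ) * a) := hpos ⟨0, hm⟩
        nlinarith
      have hbdd : BddBelow (Set.range fun i : Fin m => x i ^ 2) := by
        refine ⟨0, ?_⟩
        rintro y ⟨i, rfl⟩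
        positivity
      have hle1 : ⨅ i, x i ^ 2 ≤ x ⟨0, hm⟩ ^ 2 := ciInf_le hbdd ⟨0, hm⟩
      have hle2 : x ⟨0, hm⟩ ^ 2 ≤ ⨅ i, x i ^ 2 := le_ciInf hmin
      have hinf : ⨅ i, x i ^ 2 = x ⟨0, hm⟩ ^ 2 := le_antisymm hle1 hle2
      set X : ℕ → ℝ := fun j => Real.sin (((j : ℕ) + 1) * a) with hX_def
      have hX : ∀ i : Fin m, X i = x i := fun i => rfl
      obtain ⟨hc1, hc2⟩ := hconv x X hX
      rw [hc1, hc2, hinf]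
      have hx0 : x ⟨0, hm⟩ ^ 2 = Real.sin a ^ 2 := by
        simp only [hx_def]
        rw [show (((⟨0, hm⟩ : Fin m) : ℕ) : ℝ) = 0 by norm_num, show ((0:ℝ) + 1) * a = a by ring]
      rw [hx0]
      have hke := key_eq m hm
      rw [← ha_def] at hke
      rw [show (∑ j ∈ Finset.range (m-1), (X (j + 1) - X j) ^ 2)
          = ∑ j ∈ Finset.range (m-1), (Real.sin (((j:ℝ) + 2) * a) - Real.sin (((j:ℝ) + 1) * a)) ^ 2 by
        apply Finset.sum_congr rfl
        intro j _
        simp only [hX_def]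
        push_cast
        ring_nf]
      exact hke
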